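/- The product update of the input model I with the N-layer message-passing action model MP_N is a subdivision of I in which each edge is subdivided into 3^N edges. In particular, the number of facets of I[MP_N] equals 3^N times the number of facets of I, and the underlying graph of I[MP_N] is connected if I is connected. -/

import Mathlib

inductive Proc : Type where
  | B | W
deriving DecidableEq

/-- Layer symbols: `B` means only B's message was lost, `W` means only W's message was
lost, `bot` means both messages arrived. -/
inductive LSym : Type where
  | B | W | bot
deriving DecidableEq

/-- Projection of an input edge (pair of input values, B-component first) on an agent. -/
def proj {α : Type} : Proc → α × α → α
  | .B, e => e.1
  | .W, e => e.2

def ownSym : Proc → LSym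
  | .B => .B
  | .W => .W

def otherSym : Proc → LSym
  | .B => .W
  | .W => .B

/-- Views in the layered message-passing model: an input value, the empty view □,
or a pair of views. -/
inductive View (α : Type) : Type where
  | inp : α → View α
  | box : View α
  | pair : View α → View α → View α
deriving DecidableEq

/-- The view of a process after an execution (a list of layer symbols, most recent layer
first) starting from the input edge `e = (i,j)`:
`view a [] (i,j)` is the agent's own input; for a layer `x`,
if `x = B` then `view B = (V_B,V_W)` and `view W = (□,V_W)`;
if `x = W` then `view B = (V_B,□)` and `view W = (V_B,V_W)`;
if `x = ⊥` then both views are `(V_B,V_W)`. -/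
def view {α : Type} : Proc → List LSym → α × α → View α
  | a, [], e => .inp (proj a e)
  | .B, .W :: l, e => .pair (view .B l e) .box
  | .B, .B :: l, e => .pair (view .B l e) (view .W l e)
  | .B, .bot :: l, e => .pair (view .B l e) (view .W l e)
  | .W, .B :: l, e => .pair .box (view .W l e)
  | .W, .W :: l, e => .pair (view .B l e) (view .W l e)
  | .W, .bot :: l, e => .pair (view .B l e) (view .W l e)

/-- The indistinguishability relation `∼ₐ` of the layered message-passing action model,
on pairs (execution, input edge), executions written with the most recent layer first:
for empty executions, indistinguishability means equal own inputs; `(α·p, X) ∼ₐ (β·q, Y)`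
iff either `p = q` is the other agent's symbol (the message to `a` was lost) and
`(α,X) ∼ₐ (β,Y)`, or `p, q ∈ {⊥, own a}` and `α = β` and `X = Y`. -/
inductive Indist {α : Type} (a : Proc) :
    List LSym × (α × α) → List LSym × (α × α) → Prop where
  | nil : ∀ e f : α × α, proj a e = proj a f → Indist a ([], e) ([], f)
  | lost : ∀ (l m : List LSym) (e f : α × α), Indist a (l, e) (m, f) →
      Indist a (otherSym a :: l, e) (otherSym a :: m, f)
  | recv : ∀ (p q : LSym) (l : List LSym) (e : α × α),
      (p = LSym.bot ∨ p = ownSym a) → (q = LSym.bot ∨ q = ownSym a) →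
      Indist a (p :: l, e) (q :: l, e)

/-- Facets of the product update model I[MP_N] over a 1-dimensional chromatic input model
(a bipartite graph with edges e ∈ E, recorded as pairs (B-vertex, W-vertex)): pairs of an
execution of length N and an input edge (the action (α, X) whose precondition holds
exactly at X). -/
def PFacet (N : ℕ) {V : Type} (E : Set (V × V)) : Type :=
  {p : List LSym × (V × V) // p.1.length = N ∧ p.2 ∈ E}

/-- Two facets of I[MP_N] share their a-colored vertex iff their actions are
a-indistinguishable (which entails equal a-inputs). -/
def vrelE (N : ℕ) {V : Type} (E : Set (V × V)) (a : Proc) (p q : PFacet N E) : Prop :=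
  Indist a p.val q.val

/-- Vertices of the product update model I[MP_N]: an agent together with an equivalence
class of facets under that agent's indistinguishability relation. -/
def PVtxE (N : ℕ) {V : Type} (E : Set (V × V)) : Type :=
  Σ a : Proc, Quot (vrelE N E a)

/-- The facet of I[MP_N] corresponding to an action (execution, input edge), given by its
two vertices. -/
def facetOfE {N : ℕ} {V : Type} {E : Set (V × V)} (p : PFacet N E) : Set (PVtxE N E) :=
  {⟨Proc.B, Quot.mk _ p⟩, ⟨Proc.W, Quot.mk _ p⟩}

-- gray code value
def d3 : LSym → ℕ
  | .B => 0
  | .bot => 1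
  | .W => 2

def gval : List LSym → ℕ
  | [] => 0
  | x :: l => 3 * gval l + (if gval l % 2 = 0 then d3 x else 2 - d3 x)

lemma d3_le (x : LSym) : d3 x ≤ 2 := by cases x <;> simp [d3]

lemma gval_lt (l : List LSym) : gval l < 3 ^ l.length := by
  induction l with
  | nil => simp [gval]
  | cons x l ih =>
    have := d3_le x
    simp only [gval, List.length_cons, pow_succ]
    split <;> omega

lemma gval_inj : ∀ (l m : List LSym), l.length = m.length → gval l = gval m → l = m := by
  intro l
  induction l with
  | nil => intro m h _; cases m with | nil => rfl | cons _ _ => simp at h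
  | cons x l ih =>
    intro m h hv
    cases m with
    | nil => simp at h
    | cons y m =>
      simp only [List.length_cons, add_left_inj] at h
      have hx := d3_le x
      have hy := d3_le y
      simp only [gval] at hv
      have htv : gval l = gval m := by split at hv <;> split at hv <;> omega
      have hl := ih m h htv
      subst hl
      have hdig : (if gval l % 2 = 0 then d3 x else 2 - d3 x)
          = (if gval l % 2 = 0 then d3 y else 2 - d3 y) := by omega
      have hxy : d3 x = d3 y := by split at hdig <;> omega
      cases x <;> cases y <;> first | rfl | simp [d3] at hxy

lemma gval_surj : ∀ (n k : ℕ), k < 3 ^ n → ∃ l : List LSym, l.length = n ∧ gval l = k := by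
  intro n
  induction n with
  | zero =>
    intro k hk
    have : k = 0 := by simpa using hk
    exact ⟨[], rfl, by simp [this, gval]⟩
  | succ n ih =>
    intro k hk
    obtain ⟨l, hl, hv⟩ := ih (k / 3) (by rw [pow_succ] at hk; omega)
    have hr : k % 3 = 0 ∨ k % 3 = 1 ∨ k % 3 = 2 := by omega
    have hx : ∃ x : LSym, (if gval l % 2 = 0 then d3 x else 2 - d3 x) = k % 3 := by
      by_cases hp : gval l % 2 = 0
      · rcases hr with h | h | h
        · exact ⟨.B, by simp [hp, d3, h]⟩
        · exact ⟨.bot, by simp [hp, d3, h]⟩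
        · exact ⟨.W, by simp [hp, d3, h]⟩
      · rcases hr with h | h | h
        · exact ⟨.W, by simp [hp, d3, h]⟩
        · exact ⟨.bot, by simp [hp, d3, h]⟩
        · exact ⟨.B, by simp [hp, d3, h]⟩
    obtain ⟨x, hxd⟩ := hx
    refine ⟨x :: l, by simp [hl], ?_⟩
    have := Nat.div_add_mod k 3
    simp only [gval]
    rw [hxd, hv]
    omega

noncomputable def listEquiv (N : ℕ) : {l : List LSym // l.length = N} ≃ Fin (3 ^ N) :=
  Equiv.ofBijective (fun l => ⟨gval l.val, by simpa [l.prop] using gval_lt l.val⟩)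
    ⟨fun a b h => Subtype.ext (gval_inj _ _ (a.prop.trans b.prop.symm)
        (congrArg Fin.val h)),
     fun k => by
        obtain ⟨l, hl, hv⟩ := gval_surj N k.val k.isLt
        exact ⟨⟨l, hl⟩, Fin.ext hv⟩⟩

lemma listEquiv_val (N : ℕ) (l : {l : List LSym // l.length = N}) :
    (listEquiv N l).val = gval l.val := rfl

/-- Recursive characterization of `Indist`. -/
def IndD {α : Type} (a : Proc) : List LSym → List LSym → α × α → α × α → Prop
  | [], [], e, f => proj a e = proj a f
  | x :: l, y :: m, e, f =>
      (x = otherSym a ∧ y = otherSym a ∧ IndD a l m e f) ∨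
      ((x = LSym.bot ∨ x = ownSym a) ∧ (y = LSym.bot ∨ y = ownSym a) ∧ l = m ∧ e = f)
  | _, _, _, _ => False

lemma indist_to_indD {α : Type} {a : Proc} :
    ∀ {p q : List LSym × (α × α)}, Indist a p q → IndD a p.1 q.1 p.2 q.2 := by
  intro p q h
  induction h with
  | nil e f h => exact h
  | lost l m e f h ih => exact Or.inl ⟨rfl, rfl, ih⟩
  | recv p q l e hp hq => exact Or.inr ⟨hp, hq, rfl, rfl⟩

lemma indD_to_indist {α : Type} {a : Proc} :
    ∀ (l m : List LSym) (e f : α × α), IndD a l m e f → Indist a (l, e) (m, f) := by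
  intro l
  induction l with
  | nil =>
    intro m e f h
    cases m with
    | nil => exact .nil e f h
    | cons y m => exact absurd h (by simp [IndD])
  | cons x l ih =>
    intro m e f h
    cases m with
    | nil => exact absurd h (by simp [IndD])
    | cons y m =>
      rcases h with ⟨rfl, rfl, h⟩ | ⟨hx, hy, rfl, rfl⟩
      · exact .lost l m e f (ih m e f h)
      · exact .recv x y l e hx hy

lemma indist_iff_indD {α : Type} {a : Proc} {l m : List LSym} {e f : α × α} :
    Indist a (l, e) (m, f) ↔ IndD a l m e f :=
  ⟨fun h => indist_to_indD h, indD_to_indist l m e f⟩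

lemma otherSym_ne_bot (a : Proc) : otherSym a ≠ LSym.bot := by cases a <;> simp [otherSym]

lemma otherSym_ne_own (a : Proc) : otherSym a ≠ ownSym a := by
  cases a <;> simp [otherSym, ownSym]

lemma indD_refl {α : Type} (a : Proc) : ∀ (l : List LSym) (e : α × α), IndD a l l e e := by
  intro l e
  induction l with
  | nil => simp [IndD]
  | cons x l ih =>
    by_cases hx : x = otherSym a
    · exact Or.inl ⟨hx, hx, ih⟩
    · refine Or.inr ⟨?_, ?_, rfl, rfl⟩ <;>
        (cases a <;> cases x <;> simp_all [otherSym, ownSym])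

lemma indD_symm {α : Type} {a : Proc} :
    ∀ (l m : List LSym) (e f : α × α), IndD a l m e f → IndD a m l f e := by
  intro l
  induction l with
  | nil =>
    intro m e f h
    cases m with
    | nil => exact h.symm
    | cons y m => exact absurd h (by simp [IndD])
  | cons x l ih =>
    intro m e f h
    cases m with
    | nil => exact absurd h (by simp [IndD])
    | cons y m =>
      rcases h with ⟨hx, hy, h⟩ | ⟨hx, hy, rfl, rfl⟩
      · exact Or.inl ⟨hy, hx, ih m e f h⟩
      · exact Or.inr ⟨hy, hx, rfl, rfl⟩

lemma indD_trans {α : Type} {a : Proc} :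
    ∀ (l m k : List LSym) (e f g : α × α),
      IndD a l m e f → IndD a m k f g → IndD a l k e g := by
  intro l
  induction l with
  | nil =>
    intro m k e f g h1 h2
    cases m with
    | nil =>
      cases k with
      | nil => exact h1.trans h2
      | cons z k => exact absurd h2 (by simp [IndD])
    | cons y m => exact absurd h1 (by simp [IndD])
  | cons x l ih =>
    intro m k e f g h1 h2
    cases m with
    | nil => exact absurd h1 (by simp [IndD])
    | cons y m =>
      cases k with
      | nil => exact absurd h2 (by simp [IndD])
      | cons z k =>
        rcases h1 with ⟨hx, hy, h1⟩ | ⟨hx, hy, rfl, rfl⟩ <;>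
          rcases h2 with ⟨hy', hz, h2⟩ | ⟨hy', hz, rfl, rfl⟩
        · exact Or.inl ⟨hx, hz, ih m k e f g h1 h2⟩
        · exfalso
          rcases hy' with h | h
          · exact otherSym_ne_bot a (hy.symm.trans h)
          · exact otherSym_ne_own a (hy.symm.trans h)
        · exfalso
          rcases hy with h | h
          · exact otherSym_ne_bot a (hy'.symm.trans h)
          · exact otherSym_ne_own a (hy'.symm.trans h)
        · exact Or.inr ⟨hx, hz, rfl, rfl⟩

lemma indist_equivalence {α : Type} (a : Proc) :
    Equivalence (fun p q : List LSym × (α × α) => Indist a p q) := by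
  constructor
  · intro p
    exact indD_to_indist _ _ _ _ (indD_refl a p.1 p.2)
  · intro p q h
    exact indD_to_indist _ _ _ _ (indD_symm _ _ _ _ (indist_to_indD h))
  · intro p q r h1 h2
    exact indD_to_indist _ _ _ _
      (indD_trans _ _ _ _ _ _ (indist_to_indD h1) (indist_to_indD h2))

lemma vrelE_equivalence (N : ℕ) {V : Type} (E : Set (V × V)) (a : Proc) :
    Equivalence (vrelE N E a) := by
  constructor
  · intro p; exact (indist_equivalence a).refl p.val
  · intro p q h; exact (indist_equivalence a).symm h
  · intro p q r h1 h2; exact (indist_equivalence a).trans h1 h2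

lemma mk_eq_iff {N : ℕ} {V : Type} {E : Set (V × V)} {a : Proc} (p q : PFacet N E) :
    Quot.mk (vrelE N E a) p = Quot.mk (vrelE N E a) q ↔ Indist a p.val q.val := by
  rw [Quot.eq]
  exact (vrelE_equivalence N E a).eqvGen_iff

lemma eq_of_indD_BW {α : Type} :
    ∀ (l m : List LSym) (e f : α × α),
      IndD Proc.B l m e f → IndD Proc.W l m e f → l = m ∧ e = f := by
  intro l
  induction l with
  | nil =>
    intro m e f hB hW
    cases m with
    | nil => exact ⟨rfl, Prod.ext hB hW⟩
    | cons y m => exact absurd hB (by simp [IndD])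
  | cons x l ih =>
    intro m e f hB hW
    cases m with
    | nil => exact absurd hB (by simp [IndD])
    | cons y m =>
      rcases hB with ⟨hx, hy, hB⟩ | ⟨hx, hy, rfl, rfl⟩
      · rcases hW with ⟨hx', hy', hW⟩ | ⟨hx', hy', h1, h2⟩
        · exact absurd (hx.symm.trans hx') (by simp [otherSym])
        · subst h1; subst h2; exact ⟨by rw [hx, hy], rfl⟩
      · rcases hW with ⟨hx', hy', hW⟩ | ⟨hx', hy', h1, h2⟩
        · exact ⟨by rw [hx', hy'], rfl⟩
        · have hxb : x = LSym.bot := by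
            rcases hx with rfl | rfl
            · rfl
            · rcases hx' with h | h <;> simp [ownSym] at h
          have hyb : y = LSym.bot := by
            rcases hy with rfl | rfl
            · rfl
            · rcases hy' with h | h <;> simp [ownSym] at h
          rw [hxb, hyb]
          exact ⟨rfl, rfl⟩

lemma fwdB {α : Type} (e : α × α) :
    ∀ (l m : List LSym), IndD Proc.B l m e e →
      l = m ∨ (gval l + 1 = gval m ∧ gval l % 2 = 0)
        ∨ (gval m + 1 = gval l ∧ gval m % 2 = 0) := by
  intro l
  induction l with
  | nil =>
    intro m h
    cases m with
    | nil => exact Or.inl rfl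
    | cons y m => exact absurd h (by simp [IndD])
  | cons x l ih =>
    intro m h
    cases m with
    | nil => exact absurd h (by simp [IndD])
    | cons y m =>
      rcases h with ⟨rfl, rfl, h⟩ | ⟨hx, hy, rfl, -⟩
      · rcases ih m h with rfl | ⟨h1, h2⟩ | ⟨h1, h2⟩
        · exact Or.inl rfl
        · refine Or.inr (Or.inl ?_)
          have hw : gval m % 2 = 1 := by omega
          simp [gval, otherSym, d3, h2, hw]
          omega
        · refine Or.inr (Or.inr ?_)
          have hw : gval m % 2 = 0 := by omega
          have hl1 : gval l % 2 = 1 := by omega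
          simp [gval, otherSym, d3, hw, hl1]
          omega
      · rcases hx with rfl | rfl <;> rcases hy with rfl | rfl
        · exact Or.inl rfl
        · refine Or.inr ?_
          by_cases hp : gval l % 2 = 0 <;> simp [gval, ownSym, d3, hp] <;> omega
        · refine Or.inr ?_
          by_cases hp : gval l % 2 = 0 <;> simp [gval, ownSym, d3, hp] <;> omega
        · exact Or.inl rfl

lemma fwdW {α : Type} (e : α × α) :
    ∀ (l m : List LSym), IndD Proc.W l m e e →
      l = m ∨ (gval l + 1 = gval m ∧ gval l % 2 = 1)
        ∨ (gval m + 1 = gval l ∧ gval m % 2 = 1) := by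
  intro l
  induction l with
  | nil =>
    intro m h
    cases m with
    | nil => exact Or.inl rfl
    | cons y m => exact absurd h (by simp [IndD])
  | cons x l ih =>
    intro m h
    cases m with
    | nil => exact absurd h (by simp [IndD])
    | cons y m =>
      rcases h with ⟨rfl, rfl, h⟩ | ⟨hx, hy, rfl, -⟩
      · rcases ih m h with rfl | ⟨h1, h2⟩ | ⟨h1, h2⟩
        · exact Or.inl rfl
        · refine Or.inr (Or.inl ?_)
          have hw : gval m % 2 = 0 := by omega
          simp [gval, otherSym, d3, h2, hw]
          omega
        · refine Or.inr (Or.inr ?_)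
          have hw : gval m % 2 = 1 := by omega
          have hl1 : gval l % 2 = 0 := by omega
          simp [gval, otherSym, d3, hw, hl1]
          omega
      · rcases hx with rfl | rfl <;> rcases hy with rfl | rfl
        · exact Or.inl rfl
        · refine Or.inr ?_
          by_cases hp : gval l % 2 = 0 <;> simp [gval, ownSym, d3, hp] <;> omega
        · refine Or.inr ?_
          by_cases hp : gval l % 2 = 0 <;> simp [gval, ownSym, d3, hp] <;> omega
        · exact Or.inl rfl

lemma bwdB {α : Type} (e : α × α) :
    ∀ (l m : List LSym), l.length = m.length → gval l + 1 = gval m → gval l % 2 = 0 →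
      IndD Proc.B l m e e := by
  intro l
  induction l with
  | nil =>
    intro m hlen hsum _
    cases m with
    | nil => simp [gval] at hsum
    | cons y m => simp at hlen
  | cons x l ih =>
    intro m hlen hsum hpar
    cases m with
    | nil => simp at hlen
    | cons y m =>
      simp only [List.length_cons, add_left_inj] at hlen
      cases x with
      | B =>
        cases y with
        | B =>
          exfalso
          by_cases hp : gval l % 2 = 0 <;> by_cases hq : gval m % 2 = 0 <;>
            simp [gval, d3, hp, hq] at hsum hpar <;> omega
        | W =>
          exfalso
          by_cases hp : gval l % 2 = 0 <;> by_cases hq : gval m % 2 = 0 <;>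
            simp [gval, d3, hp, hq] at hsum hpar <;> omega
        | bot =>
          by_cases hp : gval l % 2 = 0
          · have hvw : gval l = gval m := by simp [gval, d3, hp] at hsum; omega
            have hlm := gval_inj l m hlen hvw
            subst hlm
            exact Or.inr ⟨Or.inr rfl, Or.inl rfl, rfl, rfl⟩
          · exfalso; simp [gval, d3, hp] at hsum; omega
      | W =>
        cases y with
        | W =>
          by_cases hp : gval l % 2 = 0 <;> by_cases hq : gval m % 2 = 0
          · exfalso; simp [gval, d3, hp, hq] at hsum; omega
          · have hsum' : gval l + 1 = gval m := by
              simp [gval, d3, hp, hq] at hsum; omega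
            exact Or.inl ⟨rfl, rfl, ih m hlen hsum' hp⟩
          · exfalso; simp [gval, d3, hp, hq] at hsum; omega
          · exfalso; simp [gval, d3, hp, hq] at hsum; omega
        | B =>
          exfalso
          by_cases hp : gval l % 2 = 0 <;> by_cases hq : gval m % 2 = 0 <;>
            simp [gval, d3, hp, hq] at hsum hpar <;> omega
        | bot =>
          exfalso
          by_cases hp : gval l % 2 = 0 <;> by_cases hq : gval m % 2 = 0 <;>
            simp [gval, d3, hp, hq] at hsum hpar <;> omega
      | bot =>
        cases y with
        | B =>
          by_cases hq : gval m % 2 = 0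
          · exfalso; simp [gval, d3, hq] at hsum; omega
          · have hvw : gval l = gval m := by simp [gval, d3, hq] at hsum; omega
            have hlm := gval_inj l m hlen hvw
            subst hlm
            exact Or.inr ⟨Or.inl rfl, Or.inr rfl, rfl, rfl⟩
        | W =>
          exfalso
          by_cases hp : gval l % 2 = 0 <;> by_cases hq : gval m % 2 = 0 <;>
            simp [gval, d3, hp, hq] at hsum hpar <;> omega
        | bot =>
          exfalso
          by_cases hp : gval l % 2 = 0 <;> by_cases hq : gval m % 2 = 0 <;>
            simp [gval, d3, hp, hq] at hsum hpar <;> omega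

lemma bwdW {α : Type} (e : α × α) :
    ∀ (l m : List LSym), l.length = m.length → gval l + 1 = gval m → gval l % 2 = 1 →
      IndD Proc.W l m e e := by
  intro l
  induction l with
  | nil =>
    intro m hlen hsum _
    cases m with
    | nil => simp [gval] at hsum
    | cons y m => simp at hlen
  | cons x l ih =>
    intro m hlen hsum hpar
    cases m with
    | nil => simp at hlen
    | cons y m =>
      simp only [List.length_cons, add_left_inj] at hlen
      cases x with
      | B =>
        cases y with
        | B =>
          by_cases hp : gval l % 2 = 0 <;> by_cases hq : gval m % 2 = 0
          · exfalso; simp [gval, d3, hp, hq] at hsum; omega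
          · exfalso; simp [gval, d3, hp, hq] at hsum; omega
          · have hsum' : gval l + 1 = gval m := by
              simp [gval, d3, hp, hq] at hsum; omega
            have hp' : gval l % 2 = 1 := by omega
            exact Or.inl ⟨rfl, rfl, ih m hlen hsum' hp'⟩
          · exfalso; simp [gval, d3, hp, hq] at hsum; omega
        | W =>
          exfalso
          by_cases hp : gval l % 2 = 0 <;> by_cases hq : gval m % 2 = 0 <;>
            simp [gval, d3, hp, hq] at hsum hpar <;> omega
        | bot =>
          exfalso
          by_cases hp : gval l % 2 = 0 <;> by_cases hq : gval m % 2 = 0 <;>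
            simp [gval, d3, hp, hq] at hsum hpar <;> omega
      | W =>
        cases y with
        | bot =>
          by_cases hp : gval l % 2 = 0
          · exfalso; simp [gval, d3, hp] at hsum hpar; omega
          · have hvw : gval l = gval m := by simp [gval, d3, hp] at hsum; omega
            have hlm := gval_inj l m hlen hvw
            subst hlm
            exact Or.inr ⟨Or.inr rfl, Or.inl rfl, rfl, rfl⟩
        | B =>
          exfalso
          by_cases hp : gval l % 2 = 0 <;> by_cases hq : gval m % 2 = 0 <;>
            simp [gval, d3, hp, hq] at hsum hpar <;> omega
        | W =>
          exfalso
          by_cases hp : gval l % 2 = 0 <;> by_cases hq : gval m % 2 = 0 <;>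
            simp [gval, d3, hp, hq] at hsum hpar <;> omega
      | bot =>
        cases y with
        | W =>
          by_cases hp : gval l % 2 = 0
          · by_cases hq : gval m % 2 = 0
            · have hvw : gval l = gval m := by simp [gval, d3, hp, hq] at hsum; omega
              have hlm := gval_inj l m hlen hvw
              subst hlm
              exact Or.inr ⟨Or.inl rfl, Or.inr rfl, rfl, rfl⟩
            · exfalso; simp [gval, d3, hp, hq] at hsum; omega
          · exfalso; simp [gval, d3, hp] at hsum hpar; omega
        | B =>
          exfalso
          by_cases hp : gval l % 2 = 0 <;> by_cases hq : gval m % 2 = 0 <;>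
            simp [gval, d3, hp, hq] at hsum hpar <;> omega
        | bot =>
          exfalso
          by_cases hp : gval l % 2 = 0 <;> by_cases hq : gval m % 2 = 0 <;>
            simp [gval, d3, hp, hq] at hsum hpar <;> omega

/-- Auxiliary relation on raw (execution, edge) pairs used to build connectivity. -/
def SE {V : Type} (E : Set (V × V)) (p q : List LSym × (V × V)) : Prop :=
  (∃ a, Indist a p q) ∧ p.1.length = q.1.length ∧ p.2 ∈ E ∧ q.2 ∈ E

lemma indist_any_bot {V : Type} (x : LSym) (l : List LSym) (e : V × V) :
    ∃ a, Indist a ((x :: l, e) : List LSym × (V × V)) (LSym.bot :: l, e) := by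
  cases x with
  | B => exact ⟨.B, .recv _ _ l e (Or.inr rfl) (Or.inl rfl)⟩
  | W => exact ⟨.W, .recv _ _ l e (Or.inr rfl) (Or.inl rfl)⟩
  | bot => exact ⟨.B, .recv _ _ l e (Or.inl rfl) (Or.inl rfl)⟩

lemma se_head_change {V : Type} {E : Set (V × V)} (x y : LSym) (l : List LSym)
    (e : V × V) (he : e ∈ E) :
    Relation.ReflTransGen (SE E) (x :: l, e) (y :: l, e) := by
  obtain ⟨a1, h1⟩ := indist_any_bot x l e
  obtain ⟨a2, h2⟩ := indist_any_bot y l e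
  exact Relation.ReflTransGen.trans
    (Relation.ReflTransGen.single ⟨⟨a1, h1⟩, rfl, he, he⟩)
    (Relation.ReflTransGen.single ⟨⟨a2, (indist_equivalence a2).symm h2⟩, rfl, he, he⟩)

lemma se_lift {V : Type} {E : Set (V × V)} {p q : List LSym × (V × V)} (he : p.2 ∈ E)
    (h : Relation.ReflTransGen (SE E) p q) :
    ∀ x y, Relation.ReflTransGen (SE E) (x :: p.1, p.2) (y :: q.1, q.2) := by
  induction h with
  | refl => intro x y; exact se_head_change x y p.1 p.2 he
  | @tail b c hab hbc ih =>
    intro x y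
    obtain ⟨⟨a, hind⟩, hlen, hbE, hcE⟩ := hbc
    refine ((ih x (otherSym a)).trans (Relation.ReflTransGen.single ?_)).trans
      (se_head_change (otherSym a) y _ _ hcE)
    exact ⟨⟨a, Indist.lost _ _ _ _ hind⟩, by simp [hlen], hbE, hcE⟩

lemma se_same_edge {V : Type} {E : Set (V × V)} (e : V × V) (he : e ∈ E) :
    ∀ (l m : List LSym), l.length = m.length →
      Relation.ReflTransGen (SE E) (l, e) (m, e) := by
  intro l
  induction l with
  | nil =>
    intro m hlen
    cases m with
    | nil => exact .refl
    | cons y m => simp at hlen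
  | cons x l ih =>
    intro m hlen
    cases m with
    | nil => simp at hlen
    | cons y m =>
      simp only [List.length_cons, add_left_inj] at hlen
      exact se_lift he (ih m hlen) x y

lemma indist_replicate_W {V : Type} {e f : V × V} (h : e.1 = f.1) :
    ∀ n, Indist Proc.B ((List.replicate n LSym.W, e) : List LSym × (V × V))
      (List.replicate n LSym.W, f)
  | 0 => .nil e f h
  | n + 1 => .lost _ _ _ _ (indist_replicate_W h n)

lemma indist_replicate_B {V : Type} {e f : V × V} (h : e.2 = f.2) :
    ∀ n, Indist Proc.W ((List.replicate n LSym.B, e) : List LSym × (V × V))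
      (List.replicate n LSym.B, f)
  | 0 => .nil e f h
  | n + 1 => .lost _ _ _ _ (indist_replicate_B h n)

lemma se_conn {V : Type} {E : Set (V × V)} (N : ℕ) {e f : V × V}
    (h : Relation.ReflTransGen
      (fun x y => x ∈ E ∧ y ∈ E ∧ (x.1 = y.1 ∨ x.2 = y.2)) e f)
    (he : e ∈ E) :
    ∀ l m : List LSym, l.length = N → m.length = N →
      Relation.ReflTransGen (SE E) (l, e) (m, f) := by
  induction h with
  | refl => intro l m hl hm; exact se_same_edge e he l m (hl.trans hm.symm)
  | @tail b c hab hbc ih =>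
    intro l m hl hm
    obtain ⟨hbE, hcE, hshare⟩ := hbc
    rcases hshare with hsh | hsh
    · exact ((ih l (List.replicate N LSym.W) hl (by simp)).trans
        (Relation.ReflTransGen.single
          ⟨⟨Proc.B, indist_replicate_W hsh N⟩, rfl, hbE, hcE⟩)).trans
        (se_same_edge _ hcE _ m (by simp [hm]))
    · exact ((ih l (List.replicate N LSym.B) hl (by simp)).trans
        (Relation.ReflTransGen.single
          ⟨⟨Proc.W, indist_replicate_B hsh N⟩, rfl, hbE, hcE⟩)).trans
        (se_same_edge _ hcE _ m (by simp [hm]))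

lemma se_len {V : Type} {E : Set (V × V)} {x y : List LSym × (V × V)}
    (h : Relation.ReflTransGen (SE E) x y) : x.1.length = y.1.length := by
  induction h with
  | refl => rfl
  | tail _ hbc ih => exact ih.trans hbc.2.1

lemma se_transfer {V : Type} {N : ℕ} {E : Set (V × V)} {x y : List LSym × (V × V)}
    (h : Relation.ReflTransGen (SE E) x y) :
    ∀ (p q : PFacet N E), p.val = x → q.val = y →
      Relation.ReflTransGen
        (fun p q : PFacet N E =>
          ∃ a, Quot.mk (vrelE N E a) p = Quot.mk (vrelE N E a) q) p q := by
  induction h with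
  | refl =>
    intro p q hp hq
    have : p = q := Subtype.ext (hp.trans hq.symm)
    subst this
    exact .refl
  | @tail b c hab hbc ih =>
    intro p q hp hq
    have hbl : b.1.length = N := by
      have h1 := se_len hab
      have h2 := p.prop.1
      rw [hp] at h2
      exact h1.symm.trans h2
    have hbE : b.2 ∈ E := hbc.2.2.1
    obtain ⟨⟨a, hind⟩, -, -, -⟩ := hbc
    refine (ih p ⟨b, hbl, hbE⟩ hp rfl).tail ?_
    exact ⟨a, Quot.sound (show Indist a b q.val from hq ▸ hind)⟩

def pfacetEquiv (N : ℕ) {V : Type} (E : Set (V × V)) :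
    PFacet N E ≃ ({l : List LSym // l.length = N} × E) where
  toFun p := (⟨p.val.1, p.prop.1⟩, ⟨p.val.2, p.prop.2⟩)
  invFun x := ⟨(x.1.val, x.2.val), x.1.prop, x.2.prop⟩
  left_inv p := rfl
  right_inv x := rfl

lemma facetOfE_injective (N : ℕ) {V : Type} (E : Set (V × V)) :
    Function.Injective (facetOfE (N := N) (E := E)) := by
  intro p q h
  have hmemB : (⟨Proc.B, Quot.mk _ p⟩ : PVtxE N E) ∈ facetOfE q := by
    rw [← h]; exact Set.mem_insert _ _
  have hmemW : (⟨Proc.W, Quot.mk _ p⟩ : PVtxE N E) ∈ facetOfE q := by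
    rw [← h]; exact Set.mem_insert_of_mem _ rfl
  change (_ : (a : Proc) × Quot (vrelE N E a)) = _ ∨ (_ : (a : Proc) × Quot (vrelE N E a)) = _ at hmemB hmemW
  simp only [facetOfE, Set.mem_insert_iff, Set.mem_singleton_iff, Sigma.mk.inj_iff,
    reduceCtorEq, false_and, or_false, false_or, true_and, heq_eq_eq] at hmemB hmemW
  have hB : Indist Proc.B p.val q.val := (mk_eq_iff p q).mp hmemB
  have hW : Indist Proc.W p.val q.val := (mk_eq_iff p q).mp hmemW
  have := eq_of_indD_BW p.val.1 q.val.1 p.val.2 q.val.2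
    (indist_to_indD hB) (indist_to_indD hW)
  exact Subtype.ext (Prod.ext this.1 this.2)

/-- the product update of a 1-dimensional (bipartite, colors B and W) input
model I with the N-layer message-passing action model MP_N is a subdivision of I in which
each edge is subdivided into 3^N edges.  Concretely: (1) the number of facets of I[MP_N]
is 3^N times the number of facets (edges) of I; (2) for each input edge e, the facets of
I[MP_N] lying over e form a path with 3^N edges: they can be enumerated by Fin (3^N) so
that two of them share a vertex iff they are equal or consecutive; (3) if I is connected
(any two edges joined by a chain of edges sharing endpoints) then the underlying graph of
I[MP_N] is connected (any two facets joined by a chain of facets sharing a vertex). -/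
theorem product_update_is_subdivision {V : Type} (N : ℕ) (chiI : V → Proc)
    (E : Set (V × V)) (hchrom : ∀ e ∈ E, chiI e.1 = Proc.B ∧ chiI e.2 = Proc.W)
    (hfin : E.Finite) :
    ({X : Set (PVtxE N E) | ∃ p : PFacet N E, X = facetOfE p}.ncard = 3 ^ N * E.ncard)
    ∧
    (∀ e ∈ E, ∃ ord : {p : PFacet N E // p.val.2 = e} ≃ Fin (3 ^ N),
      ∀ p q : {p : PFacet N E // p.val.2 = e},
        ((∃ a, Quot.mk (vrelE N E a) p.val = Quot.mk (vrelE N E a) q.val) ↔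
          ((ord p).val + 1 = (ord q).val ∨ (ord q).val + 1 = (ord p).val ∨ p = q)))
    ∧
    ((∀ e ∈ E, ∀ f ∈ E,
        Relation.ReflTransGen (fun x y => x ∈ E ∧ y ∈ E ∧ (x.1 = y.1 ∨ x.2 = y.2)) e f) →
      ∀ p q : PFacet N E,
        Relation.ReflTransGen
          (fun p q => ∃ a, Quot.mk (vrelE N E a) p = Quot.mk (vrelE N E a) q) p q) := by
  refine ⟨?_, ?_, ?_⟩
  · -- counting
    have hset : {X : Set (PVtxE N E) | ∃ p : PFacet N E, X = facetOfE p}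
        = Set.range (facetOfE (N := N) (E := E)) := by
      ext X
      simp only [Set.mem_setOf_eq, Set.mem_range]
      exact exists_congr fun p => eq_comm
    rw [hset, ← Nat.card_coe_set_eq,
      Nat.card_range_of_injective (facetOfE_injective N E),
      Nat.card_congr (pfacetEquiv N E), Nat.card_prod,
      Nat.card_congr (listEquiv N), Nat.card_eq_fintype_card, Fintype.card_fin,
      Nat.card_coe_set_eq]
  · -- path structure over each edge
    intro e he
    refine ⟨(⟨fun p => ⟨p.val.val.1, p.val.prop.1⟩,
      fun l => ⟨⟨(l.val, e), l.prop, he⟩, rfl⟩, ?_, ?_⟩ :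
        {p : PFacet N E // p.val.2 = e} ≃ {l : List LSym // l.length = N}).trans
      (listEquiv N), ?_⟩
    · intro p
      apply Subtype.ext
      apply Subtype.ext
      exact Prod.ext rfl p.prop.symm
    · intro l
      rfl
    · rintro ⟨⟨⟨l, e1⟩, hpl, hpE⟩, hpe⟩ ⟨⟨⟨m, e2⟩, hql, hqE⟩, hqe⟩
      simp only at hpe hqe
      subst hpe; subst hqe
      have hlen : l.length = m.length := hpl.trans hql.symm
      constructor
      · rintro ⟨a, ha⟩
        have hI := indist_to_indD ((mk_eq_iff _ _).mp ha)
        cases a with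
        | B =>
          rcases fwdB _ l m hI with h1 | ⟨h1, -⟩ | ⟨h1, -⟩
          · refine Or.inr (Or.inr ?_)
            apply Subtype.ext; apply Subtype.ext
            exact Prod.ext h1 rfl
          · exact Or.inl h1
          · exact Or.inr (Or.inl h1)
        | W =>
          rcases fwdW _ l m hI with h1 | ⟨h1, -⟩ | ⟨h1, -⟩
          · refine Or.inr (Or.inr ?_)
            apply Subtype.ext; apply Subtype.ext
            exact Prod.ext h1 rfl
          · exact Or.inl h1
          · exact Or.inr (Or.inl h1)
      · rintro (h | h | h)
        · have h' : gval l + 1 = gval m := h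
          rcases Nat.mod_two_eq_zero_or_one (gval l) with hp | hp
          · exact ⟨Proc.B, (mk_eq_iff _ _).mpr (indD_to_indist _ _ _ _ (bwdB _ l m hlen h' hp))⟩
          · exact ⟨Proc.W, (mk_eq_iff _ _).mpr (indD_to_indist _ _ _ _ (bwdW _ l m hlen h' hp))⟩
        · have h' : gval m + 1 = gval l := h
          rcases Nat.mod_two_eq_zero_or_one (gval m) with hp | hp
          · exact ⟨Proc.B, (mk_eq_iff _ _).mpr (indD_to_indist _ _ _ _
              (indD_symm _ _ _ _ (bwdB _ m l hlen.symm h' hp)))⟩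
          · exact ⟨Proc.W, (mk_eq_iff _ _).mpr (indD_to_indist _ _ _ _
              (indD_symm _ _ _ _ (bwdW _ m l hlen.symm h' hp)))⟩
        · have hlm : l = m := by
            have := congrArg (fun r => r.val.val.1) h
            simpa using this
          subst hlm
          exact ⟨Proc.B, (mk_eq_iff _ _).mpr (indD_to_indist _ _ _ _ (indD_refl Proc.B l _))⟩
  · -- connectivity
    intro hconn p q
    have h1 := hconn p.val.2 p.prop.2 q.val.2 q.prop.2
    have h2 := se_conn N h1 p.prop.2 p.val.1 q.val.1 p.prop.1 q.prop.1
    exact se_transfer h2 p q rfl rfl
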